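/- In the weighted colored-graph scheme, playing a blue vertex v whose every neighbor in the residual graph is white or green decreases the total weight by at least 3: v itself drops from weight 1 to weight 0 and each neighbor's weight drops by at least 2 (white 3 → blue/red ≤ 1, green 2 → red 0). -/

import Mathlib

open SimpleGraph Finset

inductive GameColor | white | green | blue | red
deriving DecidableEq

def GameColor.weight : GameColor → ℕ
  | white => 3
  | green => 2
  | blue => 1
  | red => 0

variable {V : Type} [Fintype V] [DecidableEq V]

/-- The set of vertices totally dominated by the played set `D`. -/
def totDom (G : SimpleGraph V) [DecidableRel G.Adj] (D : Finset V) : Finset V :=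
  Finset.univ.filter fun u => ∃ v ∈ D, G.Adj u v

/-- A vertex `v` is a legal move if playing it totally dominates a new vertex. -/
def isLegal (G : SimpleGraph V) [DecidableRel G.Adj] (D : Finset V) (v : V) : Prop :=
  ∃ u, G.Adj v u ∧ u ∉ totDom G D

instance (G : SimpleGraph V) [DecidableRel G.Adj] (D : Finset V) :
    DecidablePred (isLegal G D) := fun v =>
  decidable_of_iff (∃ u, G.Adj v u ∧ u ∉ totDom G D) Iff.rfl

/-- The color of a vertex in the partially total dominated graph with played set `D`. -/
def colorOf (G : SimpleGraph V) [DecidableRel G.Adj] (D : Finset V) (v : V) : GameColor :=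
  if v ∈ totDom G D then
    (if isLegal G D v then .blue else .red)
  else (if v ∈ D then .green else .white)

/-- The total weight of the colored graph. -/
def totalWeight (G : SimpleGraph V) [DecidableRel G.Adj] (D : Finset V) : ℕ :=
  ∑ v, (colorOf G D v).weight

/-- The residualGraph graph: delete red vertices and blue–blue edges. -/
def residualGraph (G : SimpleGraph V) [DecidableRel G.Adj] (D : Finset V) : SimpleGraph V where
  Adj u w := G.Adj u w ∧ colorOf G D u ≠ .red ∧ colorOf G D w ≠ .red ∧
      ¬(colorOf G D u = .blue ∧ colorOf G D w = .blue)
  symm := ⟨fun u w ⟨h, a, b, c⟩ => ⟨h.symm, b, a, fun ⟨x, y⟩ => c ⟨y, x⟩⟩⟩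
  loopless := ⟨fun u ⟨h, _⟩ => G.loopless.irrefl u h⟩

instance (G : SimpleGraph V) [DecidableRel G.Adj] (D : Finset V) :
    DecidableRel (residualGraph G D).Adj := fun u w =>
  decidable_of_iff (G.Adj u w ∧ colorOf G D u ≠ .red ∧ colorOf G D w ≠ .red ∧
      ¬(colorOf G D u = .blue ∧ colorOf G D w = .blue)) Iff.rfl

def legalMoves (G : SimpleGraph V) [DecidableRel G.Adj] (D : Finset V) : Finset V :=
  Finset.univ.filter (isLegal G D)

/-- The value of the total domination game from position `D` with `fuel` moves allowed,
where `isDom = true` when it is Dominator's turn (Dominator minimizes, Staller maximizes).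
Since each legal move totally dominates a new vertex, fuel `Fintype.card V` always suffices. -/
def gameVal (G : SimpleGraph V) [DecidableRel G.Adj] : Bool → ℕ → Finset V → ℕ
  | _, 0, _ => 0
  | isDom, n + 1, D =>
    if h : (legalMoves G D).Nonempty then
      if isDom then 1 + (legalMoves G D).inf' h fun v => gameVal G false n (insert v D)
      else 1 + (legalMoves G D).sup' h fun v => gameVal G true n (insert v D)
    else 0

/-- The game total domination number `γ_tg(G)`: Dominator starts, both play optimally. -/
def gtd (G : SimpleGraph V) [DecidableRel G.Adj] : ℕ :=
  gameVal G true (Fintype.card V) ∅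

lemma mem_totDom' (G : SimpleGraph V) [DecidableRel G.Adj] {D : Finset V} {u : V} :
    u ∈ totDom G D ↔ ∃ w ∈ D, G.Adj u w := by simp [totDom]

lemma totDom_subset' (G : SimpleGraph V) [DecidableRel G.Adj] {D D' : Finset V}
    (h : D ⊆ D') : totDom G D ⊆ totDom G D' := by
  intro u hu
  rw [mem_totDom'] at *
  obtain ⟨w, hw, ha⟩ := hu
  exact ⟨w, h hw, ha⟩

lemma not_legal_of_mem' (G : SimpleGraph V) [DecidableRel G.Adj] {D : Finset V} {u : V}
    (h : u ∈ D) : ¬ isLegal G D u := by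
  rintro ⟨x, hx, hnx⟩
  exact hnx ((mem_totDom' G).mpr ⟨u, h, hx.symm⟩)

lemma drop_two' (G : SimpleGraph V) [DecidableRel G.Adj] {D : Finset V} {v u : V}
    (hadj : G.Adj v u) (hu : u ∉ totDom G D) :
    (colorOf G (insert v D) u).weight + 2 ≤ (colorOf G D u).weight := by
  have hu' : u ∈ totDom G (insert v D) :=
    (mem_totDom' G).mpr ⟨v, Finset.mem_insert_self v D, hadj.symm⟩
  by_cases hD : u ∈ D
  · have hnl : ¬ isLegal G (insert v D) u :=
      not_legal_of_mem' G (Finset.mem_insert_of_mem hD)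
    simp [colorOf, hu, hu', hD, hnl, GameColor.weight]
  · simp only [colorOf, hu', if_true, hu, if_false, hD]
    split <;> simp [GameColor.weight]

lemma weight_mono' (G : SimpleGraph V) [DecidableRel G.Adj] (D : Finset V) (v w : V) :
    (colorOf G (insert v D) w).weight ≤ (colorOf G D w).weight := by
  by_cases h1 : w ∈ totDom G D
  · have h1' : w ∈ totDom G (insert v D) :=
      totDom_subset' G (Finset.subset_insert v D) h1
    by_cases h2 : isLegal G D w
    · simp only [colorOf, h1, h1', if_true]
      split <;> simp [h2, GameColor.weight]
    · have h2' : ¬ isLegal G (insert v D) w := by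
        rintro ⟨x, hx, hnx⟩
        exact h2 ⟨x, hx, fun hm => hnx (totDom_subset' G (Finset.subset_insert v D) hm)⟩
      simp [colorOf, h1, h1', h2, h2']
  · by_cases hD : w ∈ D
    · simp only [colorOf, h1, if_false, hD, if_true]
      split
      · split <;> simp [GameColor.weight]
      · simp [Finset.mem_insert_of_mem hD, GameColor.weight]
    · simp only [colorOf, h1, if_false, hD, if_true]
      split
      · split <;> simp [GameColor.weight]
      · split <;> simp [GameColor.weight]

lemma blue_elim' (G : SimpleGraph V) [DecidableRel G.Adj] {D : Finset V} {v : V}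
    (hv : colorOf G D v = .blue) : v ∈ totDom G D ∧ isLegal G D v := by
  by_cases h1 : v ∈ totDom G D
  · by_cases h2 : isLegal G D v
    · exact ⟨h1, h2⟩
    · simp [colorOf, h1, h2] at hv
  · simp only [colorOf, h1, if_false] at hv
    split at hv <;> simp_all

/-- Playing a blue vertex `v` all of whose neighbors in the residual graph are
white or green decreases the total weight by at least 3: `v` drops from weight 1 to 0 and
each residual neighbor's weight drops by at least 2. -/
theorem stmt2 (G : SimpleGraph V) [DecidableRel G.Adj] (D : Finset V) (v : V)
    (hv : colorOf G D v = .blue)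
    (hnbr : ∀ u, (residualGraph G D).Adj v u →
      colorOf G D u = .white ∨ colorOf G D u = .green) :
    totalWeight G (insert v D) + 3 ≤ totalWeight G D ∧
    colorOf G (insert v D) v = .red ∧
    ∀ u, (residualGraph G D).Adj v u →
      (colorOf G (insert v D) u).weight + 2 ≤ (colorOf G D u).weight := by
  obtain ⟨hvmem, hvlegal⟩ := blue_elim' G hv
  -- v becomes red
  have hvred : colorOf G (insert v D) v = .red := by
    have hvmem' : v ∈ totDom G (insert v D) :=
      totDom_subset' G (Finset.subset_insert v D) hvmem
    have hnl : ¬ isLegal G (insert v D) v :=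
      not_legal_of_mem' G (Finset.mem_insert_self v D)
    simp [colorOf, hvmem', hnl]
  -- residual neighbors drop by at least 2
  have hnbrdrop : ∀ u, (residualGraph G D).Adj v u →
      (colorOf G (insert v D) u).weight + 2 ≤ (colorOf G D u).weight := by
    intro u hadj
    have hg : G.Adj v u := hadj.1
    have hu : u ∉ totDom G D := by
      rcases hnbr u hadj with h | h <;>
      · intro hm
        simp only [colorOf, hm, if_true] at h
        split at h <;> simp_all
    exact drop_two' G hg hu
  refine ⟨?_, hvred, hnbrdrop⟩
  obtain ⟨u₀, hadj₀, hu₀⟩ := hvlegal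
  have hu0v : u₀ ≠ v := fun h => G.loopless.irrefl v (h ▸ hadj₀)
  have hvdrop : (colorOf G (insert v D) v).weight + 1 ≤ (colorOf G D v).weight := by
    rw [hv, hvred]; decide
  have hudrop : (colorOf G (insert v D) u₀).weight + 2 ≤ (colorOf G D u₀).weight :=
    drop_two' G hadj₀ hu₀
  unfold totalWeight
  rw [← Finset.add_sum_erase _ _ (Finset.mem_univ v),
    ← Finset.add_sum_erase _ (fun w => (colorOf G D w).weight) (Finset.mem_univ v)]
  have hu0mem : u₀ ∈ Finset.univ.erase v := Finset.mem_erase.mpr ⟨hu0v, Finset.mem_univ _⟩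
  rw [← Finset.add_sum_erase _ _ hu0mem,
    ← Finset.add_sum_erase _ (fun w => (colorOf G D w).weight) hu0mem]
  have hrest := Finset.sum_le_sum (s := (Finset.univ.erase v).erase u₀)
    (fun w _ => weight_mono' G D v w)
  omega
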